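/- Let M and N be nests on a separable Hilbert space with d(M, N) < 1, and let θ : M → N be the order isomorphism sending each P ∈ M to the unique Q ∈ N with ‖P − Q‖ < 1. Then θ preserves dimension: for P₁ ≤ P₂ in M, rank(P₂ − P₁) = rank(θ(P₂) − θ(P₁)). -/

import Mathlib

open ContinuousLinearMap

/-- A nest on a Hilbert space: a chain of orthogonal projections containing `0` and `1`,
closed under arbitrary intersections (infima of ranges) and closed spans (closures of
suprema of ranges). -/
structure IsNest {H : Type*} [NormedAddCommGroup H] [InnerProductSpace ℂ H]
    [CompleteSpace H] (𝒩 : Set (H →L[ℂ] H)) : Prop where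
  selfAdjoint : ∀ P ∈ 𝒩, IsSelfAdjoint P
  idem : ∀ P ∈ 𝒩, P ∘L P = P
  chain : ∀ P ∈ 𝒩, ∀ Q ∈ 𝒩, Q ∘L P = P ∨ P ∘L Q = Q
  zero_mem : 0 ∈ 𝒩
  one_mem : 1 ∈ 𝒩
  inf_mem : ∀ S ⊆ 𝒩, ∃ P ∈ 𝒩, LinearMap.range (P : H →ₗ[ℂ] H) = ⨅ Q ∈ S, LinearMap.range (Q : H →ₗ[ℂ] H)
  sup_mem : ∀ S ⊆ 𝒩, ∃ P ∈ 𝒩,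
    LinearMap.range (P : H →ₗ[ℂ] H) = (⨆ Q ∈ S, LinearMap.range (Q : H →ₗ[ℂ] H)).topologicalClosure


section Helpers

variable {H : Type*} [NormedAddCommGroup H] [InnerProductSpace ℂ H] [CompleteSpace H]

variable {H : Type*} [NormedAddCommGroup H] [InnerProductSpace ℂ H] [CompleteSpace H]

/-- Norm of a self-adjoint idempotent is at most 1. -/
lemma proj_norm_le_one (P : H →L[ℂ] H) (hs : IsSelfAdjoint P) (hi : P * P = P) :
    ‖P‖ ≤ 1 := by
  have h := CStarRing.norm_star_mul_self (x := P)
  rw [hs.star_eq, hi] at h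
  nlinarith [norm_nonneg P]

/-- Key injection lemma: if `F₁, F₂` are orthogonal projections, `E₂` is a projection,
and `(1-F₁)E₁`, `(1-F₂)E₂` have norm `< 1`, then
`rank (1-F₁-F₂) ≤ rank (1-E₁-E₂)`. -/
lemma key_inj (E₁ E₂ F₁ F₂ : H →L[ℂ] H)
    (hE₂s : IsSelfAdjoint E₂) (hE₂ : E₂ * E₂ = E₂)
    (hF₁ : F₁ * F₁ = F₁) (hF₂ : F₂ * F₂ = F₂)
    (hF₁₂ : F₁ * F₂ = 0) (hF₂₁ : F₂ * F₁ = 0)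
    (hn1 : ‖(1 - F₁) * E₁‖ < 1) (hn2 : ‖(1 - F₂) * E₂‖ < 1) :
    Module.rank ℂ (LinearMap.range ((1 - F₁ - F₂ : H →L[ℂ] H) : H →ₗ[ℂ] H)) ≤
      Module.rank ℂ (LinearMap.range ((1 - E₁ - E₂ : H →L[ℂ] H) : H →ₗ[ℂ] H)) := by
  set a : H →L[ℂ] H := (1 - F₂) * E₂ with ha
  set t : H →L[ℂ] H := E₂ * ((1 - F₂) * E₂) with htdef
  have hE₂n : ‖E₂‖ ≤ 1 := proj_norm_le_one E₂ hE₂s hE₂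
  have ht : ‖t‖ < 1 := by
    calc ‖t‖ ≤ ‖E₂‖ * ‖a‖ := norm_mul_le _ _
    _ ≤ 1 * ‖a‖ := by
        have := norm_nonneg a
        exact mul_le_mul_of_nonneg_right hE₂n this
    _ = ‖a‖ := one_mul _
    _ < 1 := hn2
  set u : (H →L[ℂ] H)ˣ := Units.oneSub t ht with hu
  have huval : (u : H →L[ℂ] H) = 1 - t := rfl
  -- E₂ * t = t and t * E₂ = t
  have hEt : E₂ * t = t := by
    rw [htdef, ← mul_assoc, ← mul_assoc, hE₂, mul_assoc]
  have htE : t * E₂ = t := by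
    rw [htdef, mul_assoc, mul_assoc, hE₂]
  -- E₂ commutes with u and u⁻¹
  have hcomm : E₂ * (u : H →L[ℂ] H) = (u : H →L[ℂ] H) * E₂ := by
    rw [huval, mul_sub, sub_mul, mul_one, one_mul, hEt, htE]
  have hcomm' : E₂ * (↑u⁻¹ : H →L[ℂ] H) = (↑u⁻¹ : H →L[ℂ] H) * E₂ := by
    calc E₂ * (↑u⁻¹ : H →L[ℂ] H)
        = ↑u⁻¹ * (↑u * (E₂ * ↑u⁻¹)) := (u.inv_mul_cancel_left _).symm
      _ = ↑u⁻¹ * ((↑u * E₂) * ↑u⁻¹) := by rw [mul_assoc]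
      _ = ↑u⁻¹ * ((E₂ * ↑u) * ↑u⁻¹) := by rw [hcomm]
      _ = ↑u⁻¹ * (E₂ * (↑u * ↑u⁻¹)) := by rw [mul_assoc]
      _ = ↑u⁻¹ * E₂ := by rw [u.mul_inv, mul_one]
  set fop : H →L[ℂ] H := F₂ * ((↑u⁻¹ : H →L[ℂ] H) * E₂) with hfop
  -- E₂ * fop = E₂
  have hEFE : (E₂ * F₂) * E₂ = E₂ - t := by
    have e : (E₂ * F₂) * E₂ = E₂ * E₂ - E₂ * ((1 - F₂) * E₂) := by noncomm_ring
    rw [e, hE₂, ← htdef]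
  have hEfop : E₂ * fop = E₂ := by
    calc E₂ * fop = (E₂ * F₂) * ((↑u⁻¹ : H →L[ℂ] H) * E₂) := by
          rw [hfop, ← mul_assoc]
      _ = (E₂ * F₂) * (E₂ * (↑u⁻¹ : H →L[ℂ] H)) := by rw [← hcomm']
      _ = ((E₂ * F₂) * E₂) * (↑u⁻¹ : H →L[ℂ] H) := by noncomm_ring
      _ = (E₂ * (u : H →L[ℂ] H)) * (↑u⁻¹ : H →L[ℂ] H) := by
          rw [hEFE, huval, mul_sub, mul_one, hEt]
      _ = E₂ := by rw [mul_assoc, u.mul_inv, mul_one]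
  -- operator facts about F-side
  have hF₁G' : F₁ * (1 - F₁ - F₂) = 0 := by
    have e : F₁ * (1 - F₁ - F₂) = F₁ - F₁ * F₁ - F₁ * F₂ := by noncomm_ring
    rw [e, hF₁, hF₁₂, sub_self, sub_zero]
  have hF₂G' : F₂ * (1 - F₁ - F₂) = 0 := by
    have e : F₂ * (1 - F₁ - F₂) = F₂ - F₂ * F₁ - F₂ * F₂ := by noncomm_ring
    rw [e, hF₂₁, hF₂, sub_zero, sub_self]
  have hF₁fop : F₁ * fop = 0 := by rw [hfop, ← mul_assoc, hF₁₂, zero_mul]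
  have hF₂fop : F₂ * fop = fop := by rw [hfop, ← mul_assoc, hF₂]
  have hG'idem : ((1 - F₁ - F₂ : H →L[ℂ] H)) * (1 - F₁ - F₂) = 1 - F₁ - F₂ := by
    have e : ((1 - F₁ - F₂ : H →L[ℂ] H)) * (1 - F₁ - F₂)
        = (1 - F₁ - F₂) - (F₁ * (1 - F₁ - F₂)) - (F₂ * (1 - F₁ - F₂)) := by noncomm_ring
    rw [e, hF₁G', hF₂G', sub_zero, sub_zero]
  -- the core injectivity statement
  have core : ∀ x : H, (1 - F₁ - F₂ : H →L[ℂ] H) x = x →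
      ((1 - E₁ - E₂ : H →L[ℂ] H) * (1 - fop)) x = 0 → x = 0 := by
    intro x hx h0
    have hF₁x : F₁ x = 0 := by
      have h := DFunLike.congr_fun hF₁G' x
      rw [mul_apply_eq_comp, hx] at h
      simpa using h
    have hF₂x : F₂ x = 0 := by
      have h := DFunLike.congr_fun hF₂G' x
      rw [mul_apply_eq_comp, hx] at h
      simpa using h
    set f : H := fop x with hf
    have hE₂f : E₂ f = E₂ x := by
      have h := DFunLike.congr_fun hEfop x
      rwa [mul_apply_eq_comp] at h
    set z : H := x - f with hz
    have hE₂z : E₂ z = 0 := by rw [hz, map_sub, hE₂f, sub_self]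
    have hGz : (1 - E₁ - E₂ : H →L[ℂ] H) z = 0 := by
      have h0' : (1 - E₁ - E₂ : H →L[ℂ] H) ((1 - fop) x) = 0 := by
        rwa [mul_apply_eq_comp] at h0
      have : (1 - fop : H →L[ℂ] H) x = x - f := by
        rw [sub_apply, one_apply_eq_self, hf]
      rwa [this] at h0'
    have hE₁z : E₁ z = z := by
      have h := hGz
      rw [sub_apply, sub_apply, one_apply_eq_self, hE₂z, sub_zero, sub_eq_zero] at h
      exact h.symm
    have hF₁f : F₁ f = 0 := by
      have h := DFunLike.congr_fun hF₁fop x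
      rw [mul_apply_eq_comp] at h
      simpa using h
    have hF₁z : F₁ z = 0 := by rw [hz, map_sub, hF₁x, hF₁f, sub_self]
    have hzkey : ((1 - F₁) * E₁) z = z := by
      rw [mul_apply_eq_comp, hE₁z, sub_apply, one_apply_eq_self, hF₁z, sub_zero]
    have hz0 : z = 0 := by
      by_contra hne
      have hpos : (0 : ℝ) < ‖z‖ := norm_pos_iff.mpr hne
      have hb : ‖z‖ ≤ ‖(1 - F₁) * E₁‖ * ‖z‖ := by
        conv_lhs => rw [← hzkey]
        exact le_opNorm _ _
      nlinarith
    have hxf : x = f := by rwa [sub_eq_zero] at hz0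
    have hF₂f : F₂ f = f := by
      have h := DFunLike.congr_fun hF₂fop x
      rw [mul_apply_eq_comp] at h
      exact h
    have hf0 : f = 0 := by rw [← hF₂f, ← hxf]; exact hF₂x
    exact hxf.trans hf0
  -- build the injective linear map between the ranges
  set T : H →L[ℂ] H := (1 - E₁ - E₂) * (1 - fop) with hT
  have hmem : ∀ x ∈ LinearMap.range ((1 - F₁ - F₂ : H →L[ℂ] H) : H →ₗ[ℂ] H),
      T x ∈ LinearMap.range ((1 - E₁ - E₂ : H →L[ℂ] H) : H →ₗ[ℂ] H) := by
    intro x _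
    exact ⟨(1 - fop) x, (mul_apply_eq_comp (1 - E₁ - E₂ : H →L[ℂ] H) (1 - fop) x).symm⟩
  set φ : LinearMap.range ((1 - F₁ - F₂ : H →L[ℂ] H) : H →ₗ[ℂ] H) →ₗ[ℂ]
      LinearMap.range ((1 - E₁ - E₂ : H →L[ℂ] H) : H →ₗ[ℂ] H) :=
    LinearMap.restrict (T : H →ₗ[ℂ] H) hmem with hφ
  have hinj : Function.Injective φ := by
    rw [injective_iff_map_eq_zero]
    rintro ⟨x, hx⟩ hx0
    have hxfix : (1 - F₁ - F₂ : H →L[ℂ] H) x = x := by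
      obtain ⟨y, hy⟩ := hx
      have h := DFunLike.congr_fun hG'idem y
      rw [mul_apply_eq_comp] at h
      have hy' : (1 - F₁ - F₂ : H →L[ℂ] H) y = x := hy
      rw [hy'] at h
      exact h
    have hTx : T x = 0 := by
      have h := congrArg (Subtype.val) hx0
      exact h
    have hx00 : x = 0 := core x hxfix hTx
    exact Subtype.ext hx00
  exact LinearMap.rank_le_of_injective φ hinj

lemma norm_mul_lt_one {W V : H →L[ℂ] H} (hW : ‖W‖ < 1) (hV : ‖V‖ ≤ 1) :
    ‖W * V‖ < 1 := by
  have h1 := norm_mul_le W V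
  nlinarith [norm_nonneg W, norm_nonneg V]

lemma one_sub_idem (P : H →L[ℂ] H) (h : P * P = P) :
    ((1 : H →L[ℂ] H) - P) * (1 - P) = 1 - P := by
  have e : ((1 : H →L[ℂ] H) - P) * (1 - P) = 1 - P - P + P * P := by noncomm_ring
  rw [e, h]; abel

lemma range_neg' (A : H →L[ℂ] H) :
    LinearMap.range ((-A : H →L[ℂ] H) : H →ₗ[ℂ] H) = LinearMap.range (A : H →ₗ[ℂ] H) := by
  ext x
  constructor
  · rintro ⟨y, rfl⟩; exact ⟨-y, by simp⟩
  · rintro ⟨y, rfl⟩; exact ⟨-y, by simp⟩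


end Helpers

/-- If nests `𝒨`, `𝒩` on a separable Hilbert space are at Hausdorff distance `< 1`, the
order isomorphism matching each `P` with the unique `Q` at distance `< 1` preserves
dimension: if `P₁ ≤ P₂` in `𝒨` and `Q₁, Q₂ ∈ 𝒩` with `‖Pᵢ - Qᵢ‖ < 1`, then
`rank (P₂ - P₁) = rank (Q₂ - Q₁)`. -/

theorem stmt12 {H : Type*} [NormedAddCommGroup H] [InnerProductSpace ℂ H]
    [CompleteSpace H] [TopologicalSpace.SeparableSpace H]
    (𝒨 𝒩 : Set (H →L[ℂ] H)) (hM : IsNest 𝒨) (hN : IsNest 𝒩)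
    (hdist : Metric.hausdorffDist 𝒨 𝒩 < 1)
    (P₁ P₂ : H →L[ℂ] H) (hP₁ : P₁ ∈ 𝒨) (hP₂ : P₂ ∈ 𝒨) (hle : P₂ ∘L P₁ = P₁)
    (Q₁ Q₂ : H →L[ℂ] H) (hQ₁ : Q₁ ∈ 𝒩) (hQ₂ : Q₂ ∈ 𝒩)
    (h1 : ‖P₁ - Q₁‖ < 1) (h2 : ‖P₂ - Q₂‖ < 1) :
    Module.rank ℂ (LinearMap.range ((P₂ - P₁ : H →L[ℂ] H) : H →ₗ[ℂ] H)) =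
      Module.rank ℂ (LinearMap.range ((Q₂ - Q₁ : H →L[ℂ] H) : H →ₗ[ℂ] H)) := by
  have hP₁s : IsSelfAdjoint P₁ := hM.selfAdjoint P₁ hP₁
  have hP₂s : IsSelfAdjoint P₂ := hM.selfAdjoint P₂ hP₂
  have hQ₁s : IsSelfAdjoint Q₁ := hN.selfAdjoint Q₁ hQ₁
  have hQ₂s : IsSelfAdjoint Q₂ := hN.selfAdjoint Q₂ hQ₂
  have hP₁i : P₁ * P₁ = P₁ := hM.idem P₁ hP₁
  have hP₂i : P₂ * P₂ = P₂ := hM.idem P₂ hP₂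
  have hQ₁i : Q₁ * Q₁ = Q₁ := hN.idem Q₁ hQ₁
  have hQ₂i : Q₂ * Q₂ = Q₂ := hN.idem Q₂ hQ₂
  have hP₂P₁ : P₂ * P₁ = P₁ := hle
  have hP₁P₂ : P₁ * P₂ = P₁ := by
    have h := congrArg star hP₂P₁
    rwa [star_mul, hP₁s.star_eq, hP₂s.star_eq] at h
  -- self-adjointness and idempotency of complements
  have hsa1P₂ : IsSelfAdjoint ((1 : H →L[ℂ] H) - P₂) :=
    (IsSelfAdjoint.one (R := H →L[ℂ] H)).sub hP₂s
  have hsa1Q₂ : IsSelfAdjoint ((1 : H →L[ℂ] H) - Q₂) :=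
    (IsSelfAdjoint.one (R := H →L[ℂ] H)).sub hQ₂s
  have hsa1Q₁ : IsSelfAdjoint ((1 : H →L[ℂ] H) - Q₁) :=
    (IsSelfAdjoint.one (R := H →L[ℂ] H)).sub hQ₁s
  have hi1P₂ := one_sub_idem P₂ hP₂i
  have hi1Q₂ := one_sub_idem Q₂ hQ₂i
  have hi1Q₁ := one_sub_idem Q₁ hQ₁i
  -- norms of projections
  have hnP₁ : ‖P₁‖ ≤ 1 := proj_norm_le_one P₁ hP₁s hP₁i
  have hnQ₁ : ‖Q₁‖ ≤ 1 := proj_norm_le_one Q₁ hQ₁s hQ₁i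
  have hnQ₂ : ‖Q₂‖ ≤ 1 := proj_norm_le_one Q₂ hQ₂s hQ₂i
  have hn1P₂ : ‖(1 : H →L[ℂ] H) - P₂‖ ≤ 1 := proj_norm_le_one _ hsa1P₂ hi1P₂
  have hn1Q₂ : ‖(1 : H →L[ℂ] H) - Q₂‖ ≤ 1 := proj_norm_le_one _ hsa1Q₂ hi1Q₂
  have hn1Q₁ : ‖(1 : H →L[ℂ] H) - Q₁‖ ≤ 1 := proj_norm_le_one _ hsa1Q₁ hi1Q₁
  -- zero products on P side
  have hP₁₂z : P₁ * (1 - P₂) = 0 := by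
    have e : P₁ * ((1 : H →L[ℂ] H) - P₂) = P₁ - P₁ * P₂ := by noncomm_ring
    rw [e, hP₁P₂, sub_self]
  have hP₂₁z : ((1 : H →L[ℂ] H) - P₂) * P₁ = 0 := by
    have e : ((1 : H →L[ℂ] H) - P₂) * P₁ = P₁ - P₂ * P₁ := by noncomm_ring
    rw [e, hP₂P₁, sub_self]
  -- range rewriting equalities
  have eP : (1 : H →L[ℂ] H) - P₁ - (1 - P₂) = P₂ - P₁ := by abel
  rcases hN.chain Q₁ hQ₁ Q₂ hQ₂ with hgood | hbad
  · -- good case : Q₁ ≤ Q₂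
    have hQ₂Q₁ : Q₂ * Q₁ = Q₁ := hgood
    have hQ₁Q₂ : Q₁ * Q₂ = Q₁ := by
      have h := congrArg star hQ₂Q₁
      rwa [star_mul, hQ₁s.star_eq, hQ₂s.star_eq] at h
    have hQ₁₂z : Q₁ * (1 - Q₂) = 0 := by
      have e : Q₁ * ((1 : H →L[ℂ] H) - Q₂) = Q₁ - Q₁ * Q₂ := by noncomm_ring
      rw [e, hQ₁Q₂, sub_self]
    have hQ₂₁z : ((1 : H →L[ℂ] H) - Q₂) * Q₁ = 0 := by
      have e : ((1 : H →L[ℂ] H) - Q₂) * Q₁ = Q₁ - Q₂ * Q₁ := by noncomm_ring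
      rw [e, hQ₂Q₁, sub_self]
    have eQ : (1 : H →L[ℂ] H) - Q₁ - (1 - Q₂) = Q₂ - Q₁ := by abel
    -- K1 : rank (Q₂ - Q₁) ≤ rank (P₂ - P₁)
    have K1 := key_inj (E₁ := P₁) (E₂ := 1 - P₂) (F₁ := Q₁) (F₂ := 1 - Q₂)
      hsa1P₂ hi1P₂ hQ₁i hi1Q₂ hQ₁₂z hQ₂₁z
      (by
        have e : ((1 : H →L[ℂ] H) - Q₁) * P₁ = (P₁ - Q₁) * P₁ + (P₁ - P₁ * P₁) := by
          noncomm_ring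
        rw [e, hP₁i, sub_self, add_zero]
        exact norm_mul_lt_one h1 hnP₁)
      (by
        have e : ((1 : H →L[ℂ] H) - (1 - Q₂)) * (1 - P₂)
            = (Q₂ - P₂) * (1 - P₂) + (P₂ - P₂ * P₂) := by noncomm_ring
        rw [e, hP₂i, sub_self, add_zero]
        exact norm_mul_lt_one (by rwa [norm_sub_rev] at h2) hn1P₂)
    -- K2 : rank (P₂ - P₁) ≤ rank (Q₂ - Q₁)
    have K2 := key_inj (E₁ := Q₁) (E₂ := 1 - Q₂) (F₁ := P₁) (F₂ := 1 - P₂)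
      hsa1Q₂ hi1Q₂ hP₁i hi1P₂ hP₁₂z hP₂₁z
      (by
        have e : ((1 : H →L[ℂ] H) - P₁) * Q₁ = (Q₁ - P₁) * Q₁ + (Q₁ - Q₁ * Q₁) := by
          noncomm_ring
        rw [e, hQ₁i, sub_self, add_zero]
        exact norm_mul_lt_one (by rwa [norm_sub_rev] at h1) hnQ₁)
      (by
        have e : ((1 : H →L[ℂ] H) - (1 - P₂)) * (1 - Q₂)
            = (P₂ - Q₂) * (1 - Q₂) + (Q₂ - Q₂ * Q₂) := by noncomm_ring
        rw [e, hQ₂i, sub_self, add_zero]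
        exact norm_mul_lt_one h2 hn1Q₂)
    rw [eQ, eP] at K1
    rw [eP, eQ] at K2
    exact le_antisymm K2 K1
  · -- bad case : Q₂ ≤ Q₁
    have hQ₁Q₂ : Q₁ * Q₂ = Q₂ := hbad
    have hQ₂Q₁ : Q₂ * Q₁ = Q₂ := by
      have h := congrArg star hQ₁Q₂
      rwa [star_mul, hQ₁s.star_eq, hQ₂s.star_eq] at h
    have hQ₁₂z : Q₂ * (1 - Q₁) = 0 := by
      have e : Q₂ * ((1 : H →L[ℂ] H) - Q₁) = Q₂ - Q₂ * Q₁ := by noncomm_ring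
      rw [e, hQ₂Q₁, sub_self]
    have hQ₂₁z : ((1 : H →L[ℂ] H) - Q₁) * Q₂ = 0 := by
      have e : ((1 : H →L[ℂ] H) - Q₁) * Q₂ = Q₂ - Q₁ * Q₂ := by noncomm_ring
      rw [e, hQ₁Q₂, sub_self]
    have eQ : (1 : H →L[ℂ] H) - Q₂ - (1 - Q₁) = Q₁ - Q₂ := by abel
    -- KA : rank (P₂ - P₁) ≤ rank (Q₁ - Q₂)
    have KA := key_inj (E₁ := Q₂) (E₂ := 1 - Q₁) (F₁ := P₁) (F₂ := 1 - P₂)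
      hsa1Q₁ hi1Q₁ hP₁i hi1P₂ hP₁₂z hP₂₁z
      (by
        have e : ((1 : H →L[ℂ] H) - P₁) * Q₂ = (Q₁ - P₁) * Q₂ + (Q₂ - Q₁ * Q₂) := by
          noncomm_ring
        rw [e, hQ₁Q₂, sub_self, add_zero]
        exact norm_mul_lt_one (by rwa [norm_sub_rev] at h1) hnQ₂)
      (by
        have e : ((1 : H →L[ℂ] H) - (1 - P₂)) * (1 - Q₁)
            = (P₂ - Q₂) * (1 - Q₁) + (Q₂ - Q₂ * Q₁) := by noncomm_ring
        rw [e, hQ₂Q₁, sub_self, add_zero]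
        exact norm_mul_lt_one h2 hn1Q₁)
    -- KB : rank (Q₁ - Q₂) ≤ rank (P₂ - P₁)
    have KB := key_inj (E₁ := P₁) (E₂ := 1 - P₂) (F₁ := Q₂) (F₂ := 1 - Q₁)
      hsa1P₂ hi1P₂ hQ₂i hi1Q₁ hQ₁₂z hQ₂₁z
      (by
        have e : ((1 : H →L[ℂ] H) - Q₂) * P₁ = (P₂ - Q₂) * P₁ + (P₁ - P₂ * P₁) := by
          noncomm_ring
        rw [e, hP₂P₁, sub_self, add_zero]
        exact norm_mul_lt_one h2 hnP₁)
      (by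
        have e : ((1 : H →L[ℂ] H) - (1 - Q₁)) * (1 - P₂)
            = (Q₁ - P₁) * (1 - P₂) + (P₁ - P₁ * P₂) := by noncomm_ring
        rw [e, hP₁P₂, sub_self, add_zero]
        exact norm_mul_lt_one (by rwa [norm_sub_rev] at h1) hn1P₂)
    rw [eQ, eP] at KB
    rw [eP, eQ] at KA
    have key : Module.rank ℂ (LinearMap.range ((P₂ - P₁ : H →L[ℂ] H) : H →ₗ[ℂ] H)) =
        Module.rank ℂ (LinearMap.range ((Q₁ - Q₂ : H →L[ℂ] H) : H →ₗ[ℂ] H)) := le_antisymm KA KB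
    have hr : LinearMap.range ((Q₂ - Q₁ : H →L[ℂ] H) : H →ₗ[ℂ] H) =
        LinearMap.range ((Q₁ - Q₂ : H →L[ℂ] H) : H →ₗ[ℂ] H) := by
      rw [show (Q₂ - Q₁ : H →L[ℂ] H) = -(Q₁ - Q₂) from (neg_sub _ _).symm, range_neg']
    rw [hr]
    exact key
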